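/- Let R be a commutative ring, d₁, d₂ : ℚ̂ → R functions with d₁(1/0) invertible in R, and a, b, c ∈ R. Then there exists a unique function F : ℚ̂ → R satisfying F(0/1) = a, F(1/0) = b, F(1/1) = c, and for every Farey pair (α, γ) with γ ∈ ∂(α): F(γ ⊕² α) = -d₁(α)·F(γ) + d₂(α)·F(γ ⊕ α). -/

import Mathlib

/-- Two fractions `a/b`, `c/d` form a Farey pair when `a*d - b*c = ±1`. -/
def FareyPair (a b : ℤ × ℤ) : Prop :=
  a.1 * b.2 - a.2 * b.1 = 1 ∨ a.1 * b.2 - a.2 * b.1 = -1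

/-- An extended rational: a fraction in lowest terms with nonnegative denominator,
where the fraction with denominator `0` is `1/0 = ∞`. -/
def IsExtRat (v : ℤ × ℤ) : Prop :=
  0 ≤ v.2 ∧ Int.gcd v.1 v.2 = 1 ∧ (v.2 = 0 → v.1 = 1)

/-- The set `ℚ̂ = ℚ ∪ {1/0}` of extended rationals, as fractions in lowest terms. -/
def ExtRat : Type := {v : ℤ × ℤ // IsExtRat v}

namespace FRFaux

lemma gcd_det (a b c d : ℤ) (h : a * d - b * c = 1 ∨ a * d - b * c = -1) :
    Int.gcd a b = 1 := by
  rw [← Int.isCoprime_iff_gcd_eq_one]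
  rcases h with h | h
  · exact ⟨d, -c, by linarith⟩
  · exact ⟨-d, c, by linarith⟩

lemma isExtRat_mk (m n X Y : ℤ) (h : m * Y - n * X = 1 ∨ m * Y - n * X = -1)
    (hn : 0 ≤ n) (h0 : n = 0 → m = 1) : IsExtRat (m, n) :=
  ⟨hn, gcd_det m n X Y h, h0⟩

/-- `pr = (α, γ)` is a valid parent pair of `x`. -/
def Pred (x : ExtRat) (pr : (ℤ × ℤ) × (ℤ × ℤ)) : Prop :=
  IsExtRat pr.1 ∧ IsExtRat pr.2 ∧ IsExtRat (pr.2.1 + pr.1.1, pr.2.2 + pr.1.2) ∧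
    FareyPair pr.1 pr.2 ∧ pr.2.1 + 2 * pr.1.1 = x.val.1 ∧ pr.2.2 + 2 * pr.1.2 = x.val.2 ∧
    1 ≤ pr.1.2

lemma lemA' (p q : ℤ) (h2 : 2 ≤ q) (r₀ s₀ : ℤ) (hdet0 : r₀ * q - s₀ * p = 1) :
    ∃ r s ε, (ε = 1 ∨ ε = -1) ∧ r * q - s * p = ε ∧ 1 ≤ s ∧ 2 * s ≤ q ∧
      (2 * s = q → p - 2 * r = 1) := by
  have hqpos : (0:ℤ) < q := by omega
  obtain ⟨r₁, s₁, hdet1, hsge, hslt⟩ : ∃ r₁ s₁, r₁ * q - s₁ * p = 1 ∧ 0 ≤ s₁ ∧ s₁ < q :=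
    ⟨r₀ - (s₀ / q) * p, s₀ % q, by linear_combination hdet0 - p * (Int.mul_ediv_add_emod s₀ q),
      Int.emod_nonneg _ (by omega), Int.emod_lt_of_pos _ hqpos⟩
  have hs1pos : 1 ≤ s₁ := by
    rcases eq_or_lt_of_le hsge with h | h
    · exfalso
      have hdvd : q ∣ 1 := ⟨r₁, by linear_combination -hdet1 + p * h⟩
      have := Int.le_of_dvd one_pos hdvd
      omega
    · omega
  rcases lt_trichotomy (2 * s₁) q with hc | hc | hc
  · exact ⟨r₁, s₁, 1, Or.inl rfl, hdet1, hs1pos, by omega, by omega⟩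
  · have h1 : s₁ * (2 * r₁ - p) = 1 := by linear_combination hdet1 + r₁ * hc
    have hdvd : s₁ ∣ 1 := ⟨_, h1.symm⟩
    have hse : s₁ = 1 := by have := Int.le_of_dvd one_pos hdvd; omega
    have hq2 : q = 2 := by omega
    have hre : 2 * r₁ - p = 1 := by rw [hse, one_mul] at h1; exact h1
    exact ⟨r₁ - 1, 1, -1, Or.inr rfl, by linear_combination hre + (r₁ - 1) * hq2, le_refl 1,
      by omega, fun _ => by omega⟩
  · exact ⟨p - r₁, q - s₁, -1, Or.inr rfl, by linear_combination -hdet1, by omega, by omega,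
      by omega⟩

lemma lemA (x : ExtRat) (h2 : 2 ≤ x.val.2) : ∃ pr, Pred x pr := by
  obtain ⟨hq0, hgcd, -⟩ := x.property
  obtain ⟨u, v, huv⟩ := Int.isCoprime_iff_gcd_eq_one.mpr hgcd
  obtain ⟨r, s, ε, hε, hdet, hs1, hs2, hszero⟩ :=
    lemA' x.val.1 x.val.2 h2 v (-u) (by linarith)
  refine ⟨((r, s), (x.val.1 - 2 * r, x.val.2 - 2 * s)), ?_, ?_, ?_, ?_,
    show (x.val.1 - 2 * r) + 2 * r = x.val.1 by ring,
    show (x.val.2 - 2 * s) + 2 * s = x.val.2 by ring, hs1⟩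
  · refine isExtRat_mk r s x.val.1 x.val.2 ?_ (by omega) (by omega)
    rcases hε with h | h
    · exact Or.inl (by linear_combination hdet + h)
    · exact Or.inr (by linear_combination hdet + h)
  · refine isExtRat_mk (x.val.1 - 2 * r) (x.val.2 - 2 * s) r s ?_ (by omega)
      (fun h => hszero (by omega))
    rcases hε with h | h
    · exact Or.inr (by linear_combination -hdet - h)
    · exact Or.inl (by linear_combination -hdet - h)
  · refine isExtRat_mk (x.val.1 - 2 * r + r) (x.val.2 - 2 * s + s) r s ?_ (by omega) (by omega)
    rcases hε with h | h
    · exact Or.inr (by linear_combination -hdet - h)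
    · exact Or.inl (by linear_combination -hdet - h)
  · rcases hε with h | h
    · exact Or.inl (show r * (x.val.2 - 2 * s) - s * (x.val.1 - 2 * r) = 1 by
        linear_combination hdet + h)
    · exact Or.inr (show r * (x.val.2 - 2 * s) - s * (x.val.1 - 2 * r) = -1 by
        linear_combination hdet + h)

lemma dvd_small (Q t : ℤ) (h : Q ∣ t) (h1 : -Q < t) (h2 : t < Q) : t = 0 := by
  rcases h with ⟨k, rfl⟩
  rcases lt_trichotomy k 0 with h | h | h
  · nlinarith
  · simp [h]
  · nlinarith

lemma dvd_eq (Q t : ℤ) (h : Q ∣ t) (h1 : 0 < t) (h2 : t ≤ Q) : t = Q := by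
  rcases h with ⟨k, rfl⟩
  rcases lt_trichotomy k 1 with h | h | h
  · nlinarith
  · simp [h]
  · nlinarith

lemma lemB_raw (P Q r s g1 g2 r' s' g1' g2' : ℤ) (hQ : 2 ≤ Q)
    (hF : FareyPair (r, s) (g1, g2)) (hF' : FareyPair (r', s') (g1', g2'))
    (hg0 : g2 = 0 → g1 = 1) (hg0' : g2' = 0 → g1' = 1)
    (hg2 : 0 ≤ g2) (hg2' : 0 ≤ g2')
    (he1 : g1 + 2 * r = P) (he2 : g2 + 2 * s = Q)
    (he1' : g1' + 2 * r' = P) (he2' : g2' + 2 * s' = Q)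
    (hs1 : 1 ≤ s) (hs1' : 1 ≤ s') :
    r = r' ∧ s = s' := by
  -- turn FareyPair dets into dets w.r.t. (P,Q)
  have hg1 : g1 = P - 2 * r := by omega
  have hg1' : g1' = P - 2 * r' := by omega
  have hG2 : g2 = Q - 2 * s := by omega
  have hG2' : g2' = Q - 2 * s' := by omega
  subst hg1 hg1' hG2 hG2'
  have hdet : r * Q - s * P = 1 ∨ r * Q - s * P = -1 := by
    rcases hF with h | h
    · exact Or.inl (by linear_combination h)
    · exact Or.inr (by linear_combination h)
  have hdet' : r' * Q - s' * P = 1 ∨ r' * Q - s' * P = -1 := by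
    rcases hF' with h | h
    · exact Or.inl (by linear_combination h)
    · exact Or.inr (by linear_combination h)
  have hb : 2 * s ≤ Q := by omega
  have hb' : 2 * s' ≤ Q := by omega
  rcases hdet with e1 | e1 <;> rcases hdet' with e2 | e2
  -- same sign cases
  case inl.inl | inr.inr =>
    have hdvd : Q ∣ (s' - s) := by
      first
      | exact ⟨r * s' - r' * s, by linear_combination (-s') * e1 + s * e2⟩
      | exact ⟨r * s' - r' * s, by linear_combination s' * e1 - s * e2⟩
      | exact ⟨r' * s - r * s', by linear_combination (-s') * e1 + s * e2⟩
      | exact ⟨r' * s - r * s', by linear_combination s' * e1 - s * e2⟩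
    have hss : s' - s = 0 := dvd_small Q _ hdvd (by omega) (by omega)
    have hs : s = s' := by omega
    have hr : r = r' := by
      have h3 : (r - r') * Q = 0 := by linear_combination e1 - e2 + P * hs
      rcases mul_eq_zero.mp h3 with h | h <;> omega
    exact ⟨hr, hs⟩
  -- opposite sign cases
  case inl.inr | inr.inl =>
    exfalso
    have hss : s' + s = Q := by
      have hdvd : Q ∣ (s' + s) := by
        first
        | exact ⟨s' * r - s * r', by linear_combination s * e2 - s' * e1⟩
        | exact ⟨s' * r - s * r', by linear_combination s' * e1 - s * e2⟩
        | exact ⟨s * r' - s' * r, by linear_combination s * e2 - s' * e1⟩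
        | exact ⟨s * r' - s' * r, by linear_combination s' * e1 - s * e2⟩
      exact dvd_eq Q _ hdvd (by omega) (by omega)
    have h2s : 2 * s = Q := by omega
    have h2s' : 2 * s' = Q := by omega
    have hr1 : P - 2 * r = 1 := hg0 (by omega)
    have hr1' : P - 2 * r' = 1 := hg0' (by omega)
    have hs : s = s' := by omega
    have hr : r = r' := by omega
    have : (2 : ℤ) = 0 := by
      first
      | linear_combination e2 - e1 + Q * hr - P * hs
      | linear_combination e1 - e2 - Q * hr + P * hs
    omega

lemma lemB {x : ExtRat} {pr pr' : (ℤ × ℤ) × (ℤ × ℤ)} (hp : Pred x pr) (hp' : Pred x pr') :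
    pr = pr' := by
  obtain ⟨⟨r, s⟩, g1, g2⟩ := pr
  obtain ⟨⟨r', s'⟩, g1', g2'⟩ := pr'
  obtain ⟨hα, hγ, -, hF, he1, he2, hs1⟩ := hp
  obtain ⟨hα', hγ', -, hF', he1', he2', hs1'⟩ := hp'
  simp only at hα hγ hF he1 he2 hs1 hα' hγ' hF' he1' he2' hs1'
  have hQ : 2 ≤ x.val.2 := by
    have := hγ.1; simp only at this; omega
  obtain ⟨hrs, hss⟩ := lemB_raw x.val.1 x.val.2 r s g1 g2 r' s' g1' g2' hQ hF hF'
    hγ.2.2 hγ'.2.2 hγ.1 hγ'.1 he1 he2 he1' he2' hs1 hs1'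
  have : g1 = g1' := by omega
  have : g2 = g2' := by omega
  simp_all


section Ring
variable {R : Type*} [CommRing R]

def inf : ExtRat := ⟨(1, 0), by unfold IsExtRat; decide⟩

def posF (D₁ D₂ a c : R) : ℕ → R
  | 0 => a
  | 1 => c
  | n + 2 => -D₁ * posF D₁ D₂ a c n + D₂ * posF D₁ D₂ a c (n + 1)

def negF (D₂ u a c : R) : ℕ → R
  | 0 => a
  | 1 => u * (D₂ * a - c)
  | n + 2 => u * (D₂ * negF D₂ u a c (n + 1) - negF D₂ u a c n)

def intF (D₁ D₂ u a c : R) (n : ℤ) : R :=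
  if 0 ≤ n then posF D₁ D₂ a c n.toNat else negF D₂ u a c (-n).toNat

lemma intF_ofNat (D₁ D₂ u a c : R) (m : ℕ) :
    intF D₁ D₂ u a c (m : ℤ) = posF D₁ D₂ a c m := by
  simp [intF]

lemma intF_neg (D₁ D₂ u a c : R) (m : ℕ) :
    intF D₁ D₂ u a c (-(m : ℤ)) = negF D₂ u a c m := by
  cases m with
  | zero => simp [intF, posF, negF]
  | succ k =>
    have h : ¬ (0 ≤ -((k : ℤ) + 1)) := by omega
    have h2 : (-(-((k : ℤ) + 1))).toNat = k + 1 := by omega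
    simp only [intF, Nat.cast_add, Nat.cast_one, h, if_false, h2]

lemma intF_rec (D₁ D₂ u a c : R) (hu : D₁ * u = 1) (n : ℤ) :
    intF D₁ D₂ u a c (n + 2) = -D₁ * intF D₁ D₂ u a c n + D₂ * intF D₁ D₂ u a c (n + 1) := by
  rcases le_or_gt 0 n with h | h
  · obtain ⟨m, rfl⟩ : ∃ m : ℕ, n = (m : ℤ) := ⟨n.toNat, (Int.toNat_of_nonneg h).symm⟩
    rw [show (m : ℤ) + 2 = ((m + 2 : ℕ) : ℤ) by push_cast; ring,
      show (m : ℤ) + 1 = ((m + 1 : ℕ) : ℤ) by push_cast; ring,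
      intF_ofNat, intF_ofNat, intF_ofNat]
    rfl
  · rcases eq_or_lt_of_le (show n ≤ -1 by omega) with h1 | h1
    · rw [show n = -((1:ℕ) : ℤ) by omega, show -((1:ℕ):ℤ) + 2 = ((1:ℕ) : ℤ) by norm_num,
        show -((1:ℕ):ℤ) + 1 = -((0:ℕ) : ℤ) by norm_num, intF_ofNat, intF_neg, intF_neg]
      show c = -D₁ * (u * (D₂ * a - c)) + D₂ * a
      linear_combination (D₂ * a - c) * hu
    · obtain ⟨m, rfl⟩ : ∃ m : ℕ, n = -((m : ℤ) + 2) := ⟨(-n - 2).toNat, by omega⟩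
      rw [show -((m:ℤ) + 2) + 2 = -((m:ℕ) : ℤ) by push_cast; ring,
        show -((m:ℤ) + 2) + 1 = -(((m + 1 : ℕ)) : ℤ) by push_cast; ring,
        show -((m:ℤ) + 2) = -(((m + 2 : ℕ)) : ℤ) by push_cast; ring,
        intF_neg, intF_neg, intF_neg]
      rw [show negF D₂ u a c (m + 2) = u * (D₂ * negF D₂ u a c (m + 1) - negF D₂ u a c m)
        from rfl]
      linear_combination (D₂ * negF D₂ u a c (m + 1) - negF D₂ u a c m) * hu

noncomputable def FF (d₁ d₂ : ExtRat → R) (u a b c : R) (x : ExtRat) : R :=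
  if h0 : x.val.2 = 0 then b
  else if h1 : x.val.2 = 1 then intF (d₁ inf) (d₂ inf) u a c x.val.1
  else
    have h2 : 2 ≤ x.val.2 := by have := x.property.1; omega
    (-d₁ ⟨(lemA x h2).choose.1, (lemA x h2).choose_spec.1⟩) *
        FF d₁ d₂ u a b c ⟨(lemA x h2).choose.2, (lemA x h2).choose_spec.2.1⟩ +
      d₂ ⟨(lemA x h2).choose.1, (lemA x h2).choose_spec.1⟩ *
        FF d₁ d₂ u a b c ⟨((lemA x h2).choose.2.1 + (lemA x h2).choose.1.1,
          (lemA x h2).choose.2.2 + (lemA x h2).choose.1.2), (lemA x h2).choose_spec.2.2.1⟩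
termination_by x.val.2.toNat
decreasing_by
  · obtain ⟨hα, hγ, hm, hF, he1, he2, hs⟩ := (lemA x h2).choose_spec
    show (lemA x h2).choose.2.2.toNat < x.val.2.toNat
    have := hγ.1
    omega
  · obtain ⟨hα, hγ, hm, hF, he1, he2, hs⟩ := (lemA x h2).choose_spec
    show ((lemA x h2).choose.2.2 + (lemA x h2).choose.1.2).toNat < x.val.2.toNat
    have := hγ.1
    omega

lemma FF_den0 (d₁ d₂ : ExtRat → R) (u a b c : R) (x : ExtRat) (h : x.val.2 = 0) :
    FF d₁ d₂ u a b c x = b := by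
  rw [FF, dif_pos h]

lemma FF_den1 (d₁ d₂ : ExtRat → R) (u a b c : R) (x : ExtRat) (h : x.val.2 = 1) :
    FF d₁ d₂ u a b c x = intF (d₁ inf) (d₂ inf) u a c x.val.1 := by
  rw [FF, dif_neg (by omega), dif_pos h]

lemma FF_eq_of (d₁ d₂ : ExtRat → R) (u a b c : R) (x : ExtRat) (h2 : 2 ≤ x.val.2) :
    FF d₁ d₂ u a b c x =
      (-d₁ ⟨(lemA x h2).choose.1, (lemA x h2).choose_spec.1⟩) *
          FF d₁ d₂ u a b c ⟨(lemA x h2).choose.2, (lemA x h2).choose_spec.2.1⟩ +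
        d₂ ⟨(lemA x h2).choose.1, (lemA x h2).choose_spec.1⟩ *
          FF d₁ d₂ u a b c ⟨((lemA x h2).choose.2.1 + (lemA x h2).choose.1.1,
            (lemA x h2).choose.2.2 + (lemA x h2).choose.1.2),
            (lemA x h2).choose_spec.2.2.1⟩ := by
  rw [FF, dif_neg (by omega), dif_neg (by omega)]

lemma FF_step (d₁ d₂ : ExtRat → R) (u a b c : R) (x α γ μ : ExtRat)
    (hpred : Pred x (α.val, γ.val))
    (hμ : μ.val = (γ.val.1 + α.val.1, γ.val.2 + α.val.2)) :
    FF d₁ d₂ u a b c x = -d₁ α * FF d₁ d₂ u a b c γ + d₂ α * FF d₁ d₂ u a b c μ := by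
  have h2 : 2 ≤ x.val.2 := by
    have he2 : γ.val.2 + 2 * α.val.2 = x.val.2 := hpred.2.2.2.2.2.1
    have hs : 1 ≤ α.val.2 := hpred.2.2.2.2.2.2
    have := γ.property.1
    omega
  have hch : (lemA x h2).choose = (α.val, γ.val) := lemB (lemA x h2).choose_spec hpred
  have eα : (⟨(lemA x h2).choose.1, (lemA x h2).choose_spec.1⟩ : ExtRat) = α :=
    Subtype.ext (show (lemA x h2).choose.1 = α.val by rw [hch])
  have eγ : (⟨(lemA x h2).choose.2, (lemA x h2).choose_spec.2.1⟩ : ExtRat) = γ :=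
    Subtype.ext (show (lemA x h2).choose.2 = γ.val by rw [hch])
  have eμ : (⟨((lemA x h2).choose.2.1 + (lemA x h2).choose.1.1,
      (lemA x h2).choose.2.2 + (lemA x h2).choose.1.2),
      (lemA x h2).choose_spec.2.2.1⟩ : ExtRat) = μ :=
    Subtype.ext (show ((lemA x h2).choose.2.1 + (lemA x h2).choose.1.1,
      (lemA x h2).choose.2.2 + (lemA x h2).choose.1.2) = μ.val by rw [hch, hμ])
  rw [FF_eq_of d₁ d₂ u a b c x h2, eα, eγ, eμ]

end Ring


def mkInt (p : ℤ) : ExtRat := ⟨(p, 1), by norm_num, by simp [Int.gcd], by norm_num⟩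

lemma pair_add (a b c d : ℤ) : ((a, b) : ℤ × ℤ) + (c, d) = (a + c, b + d) := rfl

lemma fareyPair_inf (g : ℤ) : FareyPair inf.val (mkInt g).val := by
  unfold FareyPair inf mkInt
  norm_num

lemma mkInt_step (g : ℤ) : (mkInt (g + 1)).val = (mkInt g).val + inf.val := by
  show ((g + 1, (1:ℤ)) : ℤ × ℤ) = ((g, 1) : ℤ × ℤ) + (1, 0)
  rw [pair_add]; norm_num

lemma mkInt_step2 (g : ℤ) : (mkInt (g + 2)).val = (mkInt g).val + inf.val + inf.val := by
  show ((g + 2, (1:ℤ)) : ℤ × ℤ) = ((g, 1) : ℤ × ℤ) + (1, 0) + (1, 0)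
  rw [pair_add, pair_add]; exact Prod.ext (by ring) (by ring)

section Ring2
variable {R : Type*} [CommRing R]

lemma int_inst (d₁ d₂ : ExtRat → R) (G : ExtRat → R)
    (hrecG : ∀ α γ : ExtRat, FareyPair α.val γ.val → ∀ m m2 : ExtRat,
      m.val = γ.val + α.val → m2.val = γ.val + α.val + α.val →
        G m2 = -d₁ α * G γ + d₂ α * G m) (g : ℤ) :
    G (mkInt (g + 2)) = -d₁ inf * G (mkInt g) + d₂ inf * G (mkInt (g + 1)) :=
  hrecG inf (mkInt g) (fareyPair_inf g) (mkInt (g + 1)) (mkInt (g + 2))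
    (mkInt_step g) (mkInt_step2 g)

end Ring2

end FRFaux

/-- Given a commutative ring `R`, functions `d₁ d₂ : ℚ̂ → R` with `d₁(1/0)` invertible,
and `a b c ∈ R`, there is a unique `(d₁,d₂)`-Farey recursive function `F : ℚ̂ → R` with
`F(0/1) = a`, `F(1/0) = b`, `F(1/1) = c`; i.e. `F(γ ⊕² α) = -d₁(α)F(γ) + d₂(α)F(γ ⊕ α)`
for every Farey pair `α, γ`. -/


theorem exists_unique_FRF (R : Type*) [CommRing R] (d₁ d₂ : ExtRat → R)
    (hinv : IsUnit (d₁ ⟨(1, 0), by unfold IsExtRat; decide⟩)) (a b c : R) :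
    ∃! F : ExtRat → R,
      F ⟨(0, 1), by unfold IsExtRat; decide⟩ = a ∧ F ⟨(1, 0), by unfold IsExtRat; decide⟩ = b ∧ F ⟨(1, 1), by unfold IsExtRat; decide⟩ = c ∧
      ∀ α γ : ExtRat, FareyPair α.val γ.val →
        ∀ m m2 : ExtRat, m.val = γ.val + α.val → m2.val = γ.val + α.val + α.val →
          F m2 = -d₁ α * F γ + d₂ α * F m := by
  classical
  obtain ⟨u, hu⟩ := (show IsUnit (d₁ FRFaux.inf) from hinv).exists_right_inv
  set G : ExtRat → R := FRFaux.FF d₁ d₂ u a b c with hGdef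
  -- base values
  have hG0 : G (FRFaux.mkInt 0) = a := by
    rw [hGdef, FRFaux.FF_den1 d₁ d₂ u a b c _ rfl]
    show FRFaux.intF (d₁ FRFaux.inf) (d₂ FRFaux.inf) u a c 0 = a
    simp [FRFaux.intF, FRFaux.posF]
  have hG1 : G (FRFaux.mkInt 1) = c := by
    rw [hGdef, FRFaux.FF_den1 d₁ d₂ u a b c _ rfl]
    show FRFaux.intF (d₁ FRFaux.inf) (d₂ FRFaux.inf) u a c 1 = c
    simp [FRFaux.intF, FRFaux.posF]
  have hGinf : ∀ x : ExtRat, x.val.2 = 0 → G x = b := by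
    intro x hx
    rw [hGdef, FRFaux.FF_den0 d₁ d₂ u a b c x hx]
  -- the recursion property for G
  have hGrec : ∀ α γ : ExtRat, FareyPair α.val γ.val →
      ∀ m m2 : ExtRat, m.val = γ.val + α.val → m2.val = γ.val + α.val + α.val →
        G m2 = -d₁ α * G γ + d₂ α * G m := by
    intro α γ hF m m2 hm hm2
    have hm' : m.val = (γ.val.1 + α.val.1, γ.val.2 + α.val.2) := by rw [hm]; rfl
    have hm2a : m2.val.1 = γ.val.1 + α.val.1 + α.val.1 := by rw [hm2]; rfl
    have hm2b : m2.val.2 = γ.val.2 + α.val.2 + α.val.2 := by rw [hm2]; rfl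
    by_cases hα0 : α.val.2 = 0
    · -- α = ∞, integer recursion
      have hα1 : α.val.1 = 1 := α.property.2.2 hα0
      have hαv : α = FRFaux.inf := Subtype.ext (Prod.ext hα1 hα0)
      have hγ2 : γ.val.2 = 1 := by
        have hγnn := γ.property.1
        rcases hF with h | h <;> rw [hα1, hα0] at h <;> omega
      have hmden : m.val.2 = 1 := by rw [hm']; show γ.val.2 + α.val.2 = 1; omega
      have hm2den : m2.val.2 = 1 := by omega
      rw [hGdef, FRFaux.FF_den1 d₁ d₂ u a b c m2 hm2den, FRFaux.FF_den1 d₁ d₂ u a b c γ hγ2,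
        FRFaux.FF_den1 d₁ d₂ u a b c m hmden, hαv]
      have hmv : m.val.1 = γ.val.1 + 1 := by
        rw [hm']; show γ.val.1 + α.val.1 = γ.val.1 + 1; omega
      have hm2v : m2.val.1 = γ.val.1 + 2 := by omega
      rw [hmv, hm2v]
      exact FRFaux.intF_rec (d₁ FRFaux.inf) (d₂ FRFaux.inf) u a c hu γ.val.1
    · have hα1 : 1 ≤ α.val.2 := by have := α.property.1; omega
      have hpred : FRFaux.Pred m2 (α.val, γ.val) :=
        ⟨α.property, γ.property, hm' ▸ m.property, hF,
          show γ.val.1 + 2 * α.val.1 = m2.val.1 by omega,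
          show γ.val.2 + 2 * α.val.2 = m2.val.2 by omega, hα1⟩
      rw [hGdef]
      exact FRFaux.FF_step d₁ d₂ u a b c m2 α γ m hpred hm'
  have e0 : FRFaux.mkInt 0 = (⟨(0, 1), by unfold IsExtRat; decide⟩ : ExtRat) := Subtype.ext rfl
  have e1 : FRFaux.mkInt 1 = (⟨(1, 1), by unfold IsExtRat; decide⟩ : ExtRat) := Subtype.ext rfl
  refine ⟨G, ⟨by rw [← e0]; exact hG0, ?_, by rw [← e1]; exact hG1, hGrec⟩, ?_⟩
  · exact hGinf _ rfl
  -- uniqueness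
  intro F' hF'
  obtain ⟨u0', uinf', u1', urec'⟩ := hF'
  have hF'0 : F' (FRFaux.mkInt 0) = a := by rw [e0]; exact u0'
  have hF'1 : F' (FRFaux.mkInt 1) = c := by rw [e1]; exact u1'
  have instF' := FRFaux.int_inst d₁ d₂ F' urec'
  have instG := FRFaux.int_inst d₁ d₂ G hGrec
  have claimZ : ∀ n : ℕ, ∀ p : ℤ, p.natAbs = n → F' (FRFaux.mkInt p) = G (FRFaux.mkInt p) := by
    intro n
    induction n using Nat.strong_induction_on with
    | _ n IH =>
      intro p hp
      rcases lt_trichotomy p 0 with hneg | rfl | hpos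
      · -- negative case: downward recursion
        have e1' := instF' p
        have e2' := instG p
        have hmeq : F' (FRFaux.mkInt (p + 1)) = G (FRFaux.mkInt (p + 1)) :=
          IH (p + 1).natAbs (by omega) _ rfl
        have hm2eq : F' (FRFaux.mkInt (p + 2)) = G (FRFaux.mkInt (p + 2)) := by
          by_cases hpm : p = -1
          · subst hpm; show F' (FRFaux.mkInt 1) = G (FRFaux.mkInt 1)
            rw [hF'1, hG1]
          · exact IH (p + 2).natAbs (by omega) _ rfl
        have h3 : d₁ FRFaux.inf * F' (FRFaux.mkInt p) = d₁ FRFaux.inf * G (FRFaux.mkInt p) := by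
          linear_combination e1' - e2' - hm2eq + d₂ FRFaux.inf * hmeq
        linear_combination u * h3 - (F' (FRFaux.mkInt p) - G (FRFaux.mkInt p)) * hu
      · rw [hF'0, hG0]
      · by_cases hp1 : p = 1
        · subst hp1; rw [hF'1, hG1]
        · have e1' := instF' (p - 2)
          have e2' := instG (p - 2)
          rw [show p - 2 + 2 = p by ring, show p - 2 + 1 = p - 1 by ring] at e1' e2'
          rw [e1', e2', IH (p - 2).natAbs (by omega) _ rfl, IH (p - 1).natAbs (by omega) _ rfl]
  have main : ∀ n : ℕ, ∀ x : ExtRat, x.val.2.toNat = n → F' x = G x := by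
    intro n
    induction n using Nat.strong_induction_on with
    | _ n IH =>
      intro x hx
      have hnn := x.property.1
      by_cases hq0 : x.val.2 = 0
      · have hx1 : x.val.1 = 1 := x.property.2.2 hq0
        have ex : x = (⟨(1, 0), by unfold IsExtRat; decide⟩ : ExtRat) :=
          Subtype.ext (Prod.ext hx1 hq0)
        rw [ex, uinf']
        exact (hGinf _ rfl).symm
      · by_cases hq1 : x.val.2 = 1
        · have ex : x = FRFaux.mkInt x.val.1 := Subtype.ext (Prod.ext rfl hq1)
          rw [ex]
          exact claimZ _ _ rfl
        · have h2 : 2 ≤ x.val.2 := by omega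
          obtain ⟨pr, hIα, hIγ, hIμ, hFp, he1, he2, hs⟩ := FRFaux.lemA x h2
          have hγnn : (0:ℤ) ≤ pr.2.2 := hIγ.1
          have hm : (⟨(pr.2.1 + pr.1.1, pr.2.2 + pr.1.2), hIμ⟩ : ExtRat).val =
              (⟨pr.2, hIγ⟩ : ExtRat).val + (⟨pr.1, hIα⟩ : ExtRat).val := by
            show (pr.2.1 + pr.1.1, pr.2.2 + pr.1.2) = pr.2 + pr.1
            exact Prod.ext rfl rfl
          have hm2 : x.val = (⟨pr.2, hIγ⟩ : ExtRat).val + (⟨pr.1, hIα⟩ : ExtRat).val +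
              (⟨pr.1, hIα⟩ : ExtRat).val := by
            show x.val = pr.2 + pr.1 + pr.1
            refine Prod.ext ?_ ?_
            · show x.val.1 = pr.2.1 + pr.1.1 + pr.1.1
              omega
            · show x.val.2 = pr.2.2 + pr.1.2 + pr.1.2
              omega
          have eqA := urec' ⟨pr.1, hIα⟩ ⟨pr.2, hIγ⟩ hFp
            ⟨(pr.2.1 + pr.1.1, pr.2.2 + pr.1.2), hIμ⟩ x hm hm2
          have eqB := hGrec ⟨pr.1, hIα⟩ ⟨pr.2, hIγ⟩ hFp
            ⟨(pr.2.1 + pr.1.1, pr.2.2 + pr.1.2), hIμ⟩ x hm hm2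
          rw [eqA, eqB, IH pr.2.2.toNat (by omega) ⟨pr.2, hIγ⟩ rfl,
            IH (pr.2.2 + pr.1.2).toNat (by omega) ⟨(pr.2.1 + pr.1.1, pr.2.2 + pr.1.2), hIμ⟩ rfl]
  funext x
  exact main x.val.2.toNat x rfl
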